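/- Pairing the PIT transforms: if X and Y are real-valued random variables (possibly dependent) whose CDFs F and G are continuous, then each of the transformed variables U = F(X) and V = G(Y) is uniformly distributed on [0,1], and the function C(u,v) = P(F(X) ≤ u, G(Y) ≤ v), u,v ∈ [0,1], satisfies P(X ≤ x, Y ≤ y) = C(F(x), G(y)) for all continuity-compatible points, i.e. for all x, y ∈ ℝ one has P(X ≤ x, Y ≤ y) = P(F(X) ≤ F(x), G(Y) ≤ G(y)). -/

import Mathlib

open MeasureTheory Set Filter

lemma pit_uniform (ν : Measure ℝ) [IsProbabilityMeasure ν] (F : ℝ → ℝ)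
    (hF : ∀ x, F x = (ν (Set.Iic x)).toReal) (hFc : Continuous F) :
    ν.map F = volume.restrict (Set.Icc (0 : ℝ) 1) := by
  have hFeq : F = ProbabilityTheory.cdf ν :=
    funext fun x => (hF x).trans (ProbabilityTheory.cdf_eq_real ν x).symm
  have hmono : Monotone F := hFeq ▸ ProbabilityTheory.monotone_cdf ν
  have h0 : ∀ x, 0 ≤ F x := fun x => hFeq ▸ ProbabilityTheory.cdf_nonneg ν x
  have h1 : ∀ x, F x ≤ 1 := fun x => hFeq ▸ ProbabilityTheory.cdf_le_one ν x
  have hbot : Tendsto F atBot (nhds 0) := hFeq ▸ ProbabilityTheory.tendsto_cdf_atBot ν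
  have htop : Tendsto F atTop (nhds 1) := hFeq ▸ ProbabilityTheory.tendsto_cdf_atTop ν
  have hIic : ∀ s : ℝ, ν (Set.Iic s) = ENNReal.ofReal (F s) := by
    intro s
    rw [hF s, ENNReal.ofReal_toReal (measure_ne_top ν _)]
  haveI : IsProbabilityMeasure (ν.map F) :=
    (Measure.isProbabilityMeasure_map hFc.measurable.aemeasurable)
  refine Measure.ext_of_Iic _ _ (fun c => ?_)
  rw [Measure.map_apply hFc.measurable measurableSet_Iic,
    Measure.restrict_apply measurableSet_Iic]
  rcases lt_or_ge c 0 with hc | hc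
  · have he : F ⁻¹' Set.Iic c = ∅ := by
      ext z; simp only [Set.mem_preimage, Set.mem_Iic, Set.mem_empty_iff_false, iff_false]
      exact fun h => absurd (le_trans (h0 z) h) (not_le.2 hc)
    have he2 : Set.Iic c ∩ Set.Icc (0:ℝ) 1 = ∅ := by
      ext z
      simp only [Set.mem_inter_iff, Set.mem_Iic, Set.mem_Icc, Set.mem_empty_iff_false, iff_false]
      rintro ⟨h1z, h2z, _⟩; linarith
    rw [he, he2]; simp
  rcases le_or_gt 1 c with hc1 | hc1
  · have he : F ⁻¹' Set.Iic c = Set.univ := by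
      ext z; simp only [Set.mem_preimage, Set.mem_Iic, Set.mem_univ, iff_true]
      exact le_trans (h1 z) hc1
    have he2 : Set.Iic c ∩ Set.Icc (0:ℝ) 1 = Set.Icc 0 1 := by
      apply Set.inter_eq_self_of_subset_right
      intro z hz; exact le_trans hz.2 hc1
    rw [he, he2, measure_univ, Real.volume_Icc]
    norm_num
  · -- 0 ≤ c < 1
    have he2 : Set.Iic c ∩ Set.Icc (0:ℝ) 1 = Set.Icc 0 c := by
      ext z
      simp only [Set.mem_inter_iff, Set.mem_Iic, Set.mem_Icc]
      constructor
      · rintro ⟨h1z, h2z, _⟩; exact ⟨h2z, h1z⟩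
      · rintro ⟨h1z, h2z⟩; exact ⟨h2z, h1z, le_trans h2z hc1.le⟩
    rw [he2, Real.volume_Icc, sub_zero]
    by_cases hne : (F ⁻¹' Set.Iic c).Nonempty
    · -- sSup argument
      obtain ⟨M, hM⟩ : ∃ M, c < F M := (htop.eventually (eventually_gt_nhds hc1)).exists
      have hbdd : BddAbove (F ⁻¹' Set.Iic c) := by
        refine ⟨M, fun z hz => ?_⟩
        by_contra h
        exact absurd (le_trans (hmono (not_le.1 h).le) hz) (not_le.2 hM)
      have hclosed : IsClosed (F ⁻¹' Set.Iic c) := isClosed_Iic.preimage hFc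
      set s := sSup (F ⁻¹' Set.Iic c) with hs
      have hsmem : s ∈ F ⁻¹' Set.Iic c := hclosed.csSup_mem hne hbdd
      have hFs : F s = c := by
        refine le_antisymm hsmem ?_
        by_contra h
        have h' : F s < c := not_le.1 h
        have : ∀ᶠ t in nhdsWithin s (Set.Ioi s), F t < c :=
          ((hFc.continuousAt.eventually_lt continuousAt_const h').filter_mono
            nhdsWithin_le_nhds)
        obtain ⟨t, htc, hts⟩ := (this.and self_mem_nhdsWithin).exists
        exact absurd (le_csSup hbdd htc.le) (not_le.2 hts)
      have heq : F ⁻¹' Set.Iic c = Set.Iic s := by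
        ext z
        simp only [Set.mem_preimage, Set.mem_Iic]
        constructor
        · intro hz; exact le_csSup hbdd hz
        · intro hz; exact le_trans (hmono hz) hsmem
      rw [heq, hIic, hFs]
    · -- empty: c must be ≤ 0
      have hcz : c ≤ 0 := by
        by_contra h
        obtain ⟨x, hx⟩ := (hbot.eventually (eventually_lt_nhds (not_le.1 h))).exists
        exact hne ⟨x, hx.le⟩
      rw [Set.not_nonempty_iff_eq_empty.1 hne, measure_empty,
        ENNReal.ofReal_eq_zero.2 hcz]
lemma pit_null_diff (ν : Measure ℝ) [IsProbabilityMeasure ν] (F : ℝ → ℝ)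
    (hF : ∀ x, F x = (ν (Set.Iic x)).toReal) (hFc : Continuous F) (x : ℝ) :
    ν ({z | F z ≤ F x} \ Set.Iic x) = 0 := by
  have hFeq : F = ProbabilityTheory.cdf ν :=
    funext fun x => (hF x).trans (ProbabilityTheory.cdf_eq_real ν x).symm
  have hmono : Monotone F := hFeq ▸ ProbabilityTheory.monotone_cdf ν
  have h0 : 0 ≤ F x := hFeq ▸ ProbabilityTheory.cdf_nonneg ν x
  have h1 : F x ≤ 1 := hFeq ▸ ProbabilityTheory.cdf_le_one ν x
  have hsub : Set.Iic x ⊆ {z | F z ≤ F x} := fun z hz => hmono hz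
  have hA : ν {z | F z ≤ F x} = ENNReal.ofReal (F x) := by
    have := pit_uniform ν F hF hFc
    have h2 : (ν.map F) (Set.Iic (F x)) = ν {z | F z ≤ F x} :=
      Measure.map_apply hFc.measurable measurableSet_Iic
    rw [this, Measure.restrict_apply measurableSet_Iic] at h2
    rw [← h2]
    have : Set.Iic (F x) ∩ Set.Icc (0:ℝ) 1 = Set.Icc 0 (F x) := by
      ext z
      simp only [Set.mem_inter_iff, Set.mem_Iic, Set.mem_Icc]
      exact ⟨fun ⟨a, b, _⟩ => ⟨b, a⟩, fun ⟨a, b⟩ => ⟨b, a, le_trans b h1⟩⟩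
    rw [this, Real.volume_Icc, sub_zero]
  have hI : ν (Set.Iic x) = ENNReal.ofReal (F x) := by
    rw [hF x, ENNReal.ofReal_toReal (measure_ne_top ν _)]
  rw [measure_diff hsub measurableSet_Iic.nullMeasurableSet (measure_ne_top ν _), hA, hI,
    tsub_self]

/-- Pairing the probability integral transforms: for a joint law `μ` of `(X, Y)` on `ℝ × ℝ`
with continuous marginal CDFs `F` and `G`, each of `F(X)` and `G(Y)` is uniform on `[0,1]`,
and `P(X ≤ x, Y ≤ y) = P(F(X) ≤ F(x), G(Y) ≤ G(y))` for all `x, y`. -/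
theorem paired_probability_integral_transform
    (μ : Measure (ℝ × ℝ)) [IsProbabilityMeasure μ]
    (F G : ℝ → ℝ)
    (hF : ∀ x, F x = ((μ.map Prod.fst) (Set.Iic x)).toReal)
    (hG : ∀ y, G y = ((μ.map Prod.snd) (Set.Iic y)).toReal)
    (hFcont : Continuous F) (hGcont : Continuous G) :
    (μ.map Prod.fst).map F = volume.restrict (Set.Icc (0 : ℝ) 1) ∧
    (μ.map Prod.snd).map G = volume.restrict (Set.Icc (0 : ℝ) 1) ∧
    ∀ x y : ℝ, μ (Set.Iic x ×ˢ Set.Iic y)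
        = μ {p : ℝ × ℝ | F p.1 ≤ F x ∧ G p.2 ≤ G y} := by
  haveI h1 : IsProbabilityMeasure (μ.map Prod.fst) :=
    Measure.isProbabilityMeasure_map measurable_fst.aemeasurable
  haveI h2 : IsProbabilityMeasure (μ.map Prod.snd) :=
    Measure.isProbabilityMeasure_map measurable_snd.aemeasurable
  refine ⟨pit_uniform _ F hF hFcont, pit_uniform _ G hG hGcont, fun x y => ?_⟩
  have hFeq : F = ProbabilityTheory.cdf (μ.map Prod.fst) :=
    funext fun x => (hF x).trans (ProbabilityTheory.cdf_eq_real _ x).symm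
  have hGeq : G = ProbabilityTheory.cdf (μ.map Prod.snd) :=
    funext fun y => (hG y).trans (ProbabilityTheory.cdf_eq_real _ y).symm
  have hFmono : Monotone F := hFeq ▸ ProbabilityTheory.monotone_cdf _
  have hGmono : Monotone G := hGeq ▸ ProbabilityTheory.monotone_cdf _
  set A : Set ℝ := {z | F z ≤ F x} with hA
  set B : Set ℝ := {z | G z ≤ G y} with hB
  have hAm : MeasurableSet A := (isClosed_le hFcont continuous_const).measurableSet
  have hBm : MeasurableSet B := (isClosed_le hGcont continuous_const).measurableSet
  have hset : {p : ℝ × ℝ | F p.1 ≤ F x ∧ G p.2 ≤ G y} = A ×ˢ B := rfl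
  rw [hset]
  have hsubF : Set.Iic x ⊆ A := fun z hz => hFmono hz
  have hsubG : Set.Iic y ⊆ B := fun z hz => hGmono hz
  have hnullA : μ ((A \ Set.Iic x) ×ˢ (Set.univ : Set ℝ)) = 0 := by
    rw [Set.prod_univ, ← Measure.map_apply measurable_fst (hAm.diff measurableSet_Iic)]
    exact pit_null_diff _ F hF hFcont x
  have hnullB : μ ((Set.univ : Set ℝ) ×ˢ (B \ Set.Iic y)) = 0 := by
    rw [Set.univ_prod, ← Measure.map_apply measurable_snd (hBm.diff measurableSet_Iic)]
    exact pit_null_diff _ G hG hGcont y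
  refine le_antisymm (measure_mono (Set.prod_mono hsubF hsubG)) ?_
  have hcover : A ×ˢ B ⊆ (Set.Iic x ×ˢ Set.Iic y) ∪
      ((A \ Set.Iic x) ×ˢ (Set.univ : Set ℝ)) ∪
      ((Set.univ : Set ℝ) ×ˢ (B \ Set.Iic y)) := by
    rintro ⟨a, b⟩ ⟨ha, hb⟩
    by_cases hax : a ≤ x
    · by_cases hby : b ≤ y
      · exact Or.inl (Or.inl ⟨hax, hby⟩)
      · exact Or.inr ⟨Set.mem_univ _, hb, hby⟩
    · exact Or.inl (Or.inr ⟨⟨ha, hax⟩, Set.mem_univ _⟩)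
  calc μ (A ×ˢ B) ≤ μ ((Set.Iic x ×ˢ Set.Iic y) ∪
        ((A \ Set.Iic x) ×ˢ (Set.univ : Set ℝ)) ∪
        ((Set.univ : Set ℝ) ×ˢ (B \ Set.Iic y))) := measure_mono hcover
    _ ≤ μ ((Set.Iic x ×ˢ Set.Iic y) ∪ ((A \ Set.Iic x) ×ˢ (Set.univ : Set ℝ)))
        + μ ((Set.univ : Set ℝ) ×ˢ (B \ Set.Iic y)) := measure_union_le _ _
    _ ≤ μ (Set.Iic x ×ˢ Set.Iic y) + μ ((A \ Set.Iic x) ×ˢ (Set.univ : Set ℝ)) + _ :=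
        add_le_add (measure_union_le _ _) le_rfl
    _ = μ (Set.Iic x ×ˢ Set.Iic y) := by rw [hnullA, hnullB, add_zero, add_zero]
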